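/- (Claim 3.1) Let G be a finite simple bipartite graph (i.e., G is 2-colorable), k ≥ 1, and M a k-limited spanning subgraph of G. Then every M-augmenting trail of minimum length among all M-augmenting trails in G is a path, i.e., visits no vertex more than once. -/

import Mathlib

open SimpleGraph

variable {V : Type*}

/-- The degree of a vertex `v` in a (sub)graph `M`. -/
noncomputable def mdeg (M : SimpleGraph V) (v : V) : ℕ := (M.neighborSet v).ncard

/-- `M` is a `k`-limited spanning subgraph of `G`: a subgraph on all the vertices of `G`
with all degrees at most `k`. -/
def IsKLimitedSpanning (G M : SimpleGraph V) (k : ℕ) : Prop :=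
  M ≤ G ∧ ∀ v : V, mdeg M v ≤ k

/-- `F` is a `k`-factor of `G`: a spanning subgraph all of whose degrees equal `k`. -/
def IsKFactor (G F : SimpleGraph V) (k : ℕ) : Prop :=
  F ≤ G ∧ ∀ v : V, mdeg F v = k

/-- The deficiency `σ(M) = ∑_{v} (k - deg_M v)`. -/
noncomputable def sigmaDef [Fintype V] (M : SimpleGraph V) (k : ℕ) : ℕ :=
  ∑ v : V, (k - mdeg M v)

/-- An `M`-alternating trail: a trail whose consecutive edges alternate between
membership and non-membership in `E(M)`. -/
def IsAltTrail {G : SimpleGraph V} (M : SimpleGraph V) {u v : V} (p : G.Walk u v) : Prop :=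
  p.IsTrail ∧ ∀ (i : ℕ) (h : i + 1 < p.edges.length),
    ((p.edges[i]'(Nat.lt_of_succ_lt h)) ∈ M.edgeSet ↔ (p.edges[i+1]'h) ∉ M.edgeSet)

/-- An `M`-augmenting trail (with respect to the bound `k`): an `M`-alternating trail whose
first and last edges are not in `E(M)`, whose endpoints are unfilled in `M`, all of whose
inner vertex visits are filled in `M`, and which, if closed at `v₀ = u = v`, additionally
satisfies `deg_M v₀ < k - 1`. -/
def IsAugTrail (G M : SimpleGraph V) (k : ℕ) {u v : V} (p : G.Walk u v) : Prop :=
  IsAltTrail M p ∧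
  p.edges ≠ [] ∧
  (∀ e, p.edges.head? = some e → e ∉ M.edgeSet) ∧
  (∀ e, p.edges.getLast? = some e → e ∉ M.edgeSet) ∧
  mdeg M u < k ∧ mdeg M v < k ∧
  (∀ w ∈ p.support.tail.dropLast, mdeg M w = k) ∧
  (u = v → mdeg M u < k - 1)

/-- Claim 3.1: In a bipartite (2-colorable) graph, every `M`-augmenting
trail of minimum length among all `M`-augmenting trails is a path. -/

private lemma fin2_iff {x y z : Fin 2} (h : x ≠ y) : x = z ↔ ¬ y = z := by
  have hx := x.isLt; have hy := y.isLt; have hz := z.isLt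
  simp only [Fin.ext_iff, Ne] at *
  omega

private lemma walk_parity {G : SimpleGraph V} (C : G.Coloring (Fin 2)) {a b : V}
    (q : G.Walk a b) : (C a = C b ↔ Even q.length) := by
  induction q with
  | nil => simp
  | cons h q ih =>
    rw [Walk.length_cons, Nat.even_add_one, ← ih]
    exact fin2_iff (C.valid h)

private lemma even_closed {G : SimpleGraph V} (hbip : G.Colorable 2) {v : V}
    (c : G.Walk v v) : Even c.length := by
  obtain ⟨C⟩ := hbip
  exact (walk_parity C c).mp rfl

private lemma oddAlt {M : SimpleGraph V} {l : List (Sym2 V)}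
    (halt : ∀ i (h : i + 1 < l.length), (l[i] ∈ M.edgeSet ↔ l[i+1] ∉ M.edgeSet))
    (hhead : ∀ e, l.head? = some e → e ∉ M.edgeSet) :
    ∀ i (h : i < l.length), (l[i] ∈ M.edgeSet ↔ i % 2 = 1) := by
  intro i
  induction i with
  | zero =>
    intro h
    have hne : l ≠ [] := List.ne_nil_of_length_pos h
    have h0 : l.head? = some l[0] := by
      rw [List.head?_eq_head hne, List.getElem_zero h]
    simp [hhead _ h0]
  | succ n ih =>
    intro h
    have h1 := ih (by omega)
    have h2 := halt n h
    have h3 : (n+1) % 2 = 1 ↔ ¬ (n % 2 = 1) := by omega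
    tauto

private lemma oddAlt_cut {M : SimpleGraph V} {A D C : List (Sym2 V)}
    (hm : D.length % 2 = 0)
    (h : ∀ i (hi : i < (A ++ (D ++ C)).length),
      ((A ++ (D ++ C))[i] ∈ M.edgeSet ↔ i % 2 = 1)) :
    ∀ i (hi : i < (A ++ C).length), ((A ++ C)[i] ∈ M.edgeSet ↔ i % 2 = 1) := by
  intro i hi
  have hi' : i < A.length + C.length := by simpa using hi
  by_cases hiA : i < A.length
  · have h1 := h i (by simp; omega)
    rw [List.getElem_append_left hiA] at h1 ⊢
    exact h1
  · have h1 := h (i + D.length) (by simp; omega)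
    rw [List.getElem_append_right (by omega)] at h1
    rw [List.getElem_append_right (by omega : D.length ≤ i + D.length - A.length)] at h1
    rw [List.getElem_append_right (by omega : A.length ≤ i)]
    have hidx : i + D.length - A.length - D.length = i - A.length := by omega
    simp only [hidx] at h1
    have hpar : (i + D.length) % 2 = 1 ↔ i % 2 = 1 := by omega
    rw [hpar] at h1
    exact h1

private lemma mem_dropLast_cut {α : Type*} {A B C : List α} (hB : B ≠ []) {x : α}
    (hx : x ∈ (A ++ C).dropLast) : x ∈ (A ++ (B ++ C)).dropLast := by
  rcases eq_or_ne C [] with rfl | hC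
  · simp only [List.append_nil] at hx ⊢
    rw [List.dropLast_append_of_ne_nil hB]
    exact List.mem_append_left _ (List.dropLast_sublist A |>.subset hx)
  · rw [List.dropLast_append_of_ne_nil hC] at hx
    rw [List.dropLast_append_of_ne_nil (by simp [hC] : B ++ C ≠ []),
      List.dropLast_append_of_ne_nil hC]
    simp only [List.mem_append] at hx ⊢
    tauto


set_option maxHeartbeats 2000000 in
theorem min_augTrail_isPath_of_bipartite [Fintype V] (G M : SimpleGraph V) (k : ℕ)
    (hk : 1 ≤ k) (hbip : G.Colorable 2) (hM : IsKLimitedSpanning G M k) {u w : V}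
    (p : G.Walk u w) (hP : IsAugTrail G M k p)
    (hmin : ∀ (a b : V) (q : G.Walk a b), IsAugTrail G M k q → p.length ≤ q.length) :
    p.IsPath := by
  classical
  obtain ⟨⟨htrail, halt⟩, hnil, hhead, hlast, hu, hw, hfill, hclosed⟩ := hP
  have hodd := oddAlt halt hhead
  have hlenE : p.edges.length = p.length := p.length_edges
  have hpos : 0 < p.edges.length := List.length_pos_iff.mpr hnil
  have hlastE : ¬ ((p.edges.length - 1) % 2 = 1) := by
    have hsome : p.edges.getLast? = some (p.edges[p.edges.length - 1]'(by omega)) := by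
      rw [List.getLast?_eq_getLast hnil, List.getLast_eq_getElem]
    have hnm := hlast _ hsome
    intro hparity
    exact hnm ((hodd _ (by omega)).mpr hparity)
  have huw : u ≠ w := by
    rintro rfl
    have hev := even_closed hbip p
    rw [Nat.even_iff] at hev
    omega
  by_contra hpath
  rw [Walk.isPath_def] at hpath
  obtain ⟨v, hdup⟩ := List.exists_duplicate_iff_not_nodup.mpr hpath
  have hv : v ∈ p.support := hdup.mem
  have hcount : 2 ≤ p.support.count v := List.duplicate_iff_two_le_count.mp hdup
  obtain ⟨q1, hq1def⟩ : ∃ q : G.Walk u v, q = p.takeUntil v hv := ⟨_, rfl⟩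
  obtain ⟨q2, hq2def⟩ : ∃ q : G.Walk v w, q = p.dropUntil v hv := ⟨_, rfl⟩
  have hspec : q1.append q2 = p := by rw [hq1def, hq2def]; exact p.take_spec hv
  have hsupp : p.support = q1.support ++ q2.support.tail := by
    rw [← hspec, Walk.support_append]
  have hvq2 : v ∈ q2.support.tail := by
    by_contra hnot
    have hc1 : q1.support.count v = 1 := by
      rw [hq1def]; exact p.count_support_takeUntil_eq_one hv
    rw [hsupp, List.count_append, List.count_eq_zero_of_not_mem hnot, hc1] at hcount
    omega
  have hq2nil : ¬ q2.Nil := by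
    intro hnilq
    have h0 : q2.length = 0 := Walk.nil_iff_length_eq.mp hnilq
    have h1 : q2.support.length = 1 := by rw [Walk.length_support, h0]
    have h2 : q2.support.tail.length = 0 := by simp [List.length_tail, h1]
    rw [List.length_eq_zero_iff] at h2
    rw [h2] at hvq2
    simp at hvq2
  obtain ⟨v', hadj, q3, hq2⟩ := Walk.not_nil_iff.mp hq2nil
  have hvq3 : v ∈ q3.support := by
    rw [hq2] at hvq2
    simpa using hvq2
  obtain ⟨mid, hmiddef⟩ : ∃ q : G.Walk v' v, q = q3.takeUntil v hvq3 := ⟨_, rfl⟩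
  obtain ⟨r, hrdef⟩ : ∃ q : G.Walk v w, q = q3.dropUntil v hvq3 := ⟨_, rfl⟩
  have hq3 : mid.append r = q3 := by rw [hmiddef, hrdef]; exact q3.take_spec hvq3
  obtain ⟨D, hDdef⟩ : ∃ l : List (Sym2 V), l = (Walk.cons hadj mid).edges := ⟨_, rfl⟩
  have hpedge : p.edges = q1.edges ++ (D ++ r.edges) := by
    conv_lhs => rw [← hspec]
    rw [Walk.edges_append, hq2, ← hq3]
    simp [Walk.edges_append, Walk.edges_cons, hDdef]
  have hDlen : D.length = mid.length + 1 := by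
    rw [hDdef, Walk.length_edges, Walk.length_cons]
  have hDeven : D.length % 2 = 0 := by
    have h := even_closed hbip (Walk.cons hadj mid)
    rw [Nat.even_iff] at h
    rw [hDdef, Walk.length_edges]
    exact h
  obtain ⟨pn, hpndef⟩ : ∃ q : G.Walk u w, q = q1.append r := ⟨_, rfl⟩
  have hpne : pn.edges = q1.edges ++ r.edges := by rw [hpndef, Walk.edges_append]
  have hoddn := oddAlt_cut hDeven (by rw [← hpedge]; exact hodd)
  have hoddpn : ∀ i (hi : i < pn.edges.length), (pn.edges[i] ∈ M.edgeSet ↔ i % 2 = 1) := by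
    rw [hpne]; exact hoddn
  have hlen1 : p.edges.length = q1.edges.length + (D.length + r.edges.length) := by
    rw [hpedge]; simp
  have hpnlen : pn.edges.length = q1.edges.length + r.edges.length := by
    rw [hpne]; simp
  have hpnne : pn.edges ≠ [] := by
    rw [hpne]
    intro hAC
    obtain ⟨h1, h2⟩ := List.append_eq_nil_iff.mp hAC
    have h3 : u = v := Walk.eq_of_length_eq_zero (by rw [← Walk.length_edges, h1]; rfl)
    have h4 : v = w := Walk.eq_of_length_eq_zero (by rw [← Walk.length_edges, h2]; rfl)
    exact huw (h3.trans h4)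
  have hpnpos : 0 < pn.edges.length := List.length_pos_iff.mpr hpnne
  have haug : IsAugTrail G M k pn := by
    refine ⟨⟨⟨?_⟩, ?_⟩, hpnne, ?_, ?_, hu, hw, ?_, fun h => absurd h huw⟩
    · have hsub : List.Sublist pn.edges p.edges := by
        rw [hpne, hpedge]
        exact (List.sublist_append_right D r.edges).append_left q1.edges
      exact hsub.nodup htrail.edges_nodup
    · intro i h
      have h1 := hoddpn i (by omega)
      have h2 := hoddpn (i+1) h
      have h3 : (i % 2 = 1) ↔ ¬ ((i+1) % 2 = 1) := by omega
      tauto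
    · intro e he
      rw [List.head?_eq_head hpnne, Option.some.injEq] at he
      subst he
      have h0 := hoddpn 0 hpnpos
      rw [List.getElem_zero hpnpos] at h0
      intro hmem
      have := h0.mp hmem
      omega
    · intro e he
      rw [List.getLast?_eq_getLast hpnne, Option.some.injEq] at he
      subst he
      rw [List.getLast_eq_getElem]
      intro hmem
      have h0 := (hoddpn (pn.edges.length - 1) (by omega)).mp hmem
      omega
    · intro x hx
      apply hfill
      have hsup_pn : pn.support.tail = q1.support.tail ++ r.support.tail := by
        rw [hpndef, Walk.support_append, List.tail_append_of_ne_nil (Walk.support_ne_nil _)]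
      have hsup_p : p.support.tail = q1.support.tail ++ (mid.support ++ r.support.tail) := by
        rw [hsupp, List.tail_append_of_ne_nil (Walk.support_ne_nil _), hq2]
        congr 1
        rw [← hq3]
        simp [Walk.support_cons, Walk.support_append]
      rw [hsup_pn] at hx
      rw [hsup_p]
      exact mem_dropLast_cut (Walk.support_ne_nil mid) hx
  have hle := hmin u w pn haug
  have hlt : pn.length < p.length := by
    rw [← Walk.length_edges, ← Walk.length_edges]
    omega
  omega
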